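/- If F: C → D is a monoidal functor and A is an algebra in D, then the comma category F↓A is monoidal, with tensor product (X,x)⊗(Y,y) = (X⊗Y, μ_A ∘ (x⊗y) ∘ F_{X,Y}) and unit (I, ι_A ∘ F_0), and the forgetful functor F↓A → C is monoidal. -/

import Mathlib

open CategoryTheory MonoidalCategory Functor.LaxMonoidal Functor.OplaxMonoidal

noncomputable section

namespace StmtTwoAux

variable {C D : Type*} [Category C] [Category D]
    [MonoidalCategory C] [MonoidalCategory D]
    (F : C ⥤ D) [F.Monoidal] (A : Mon D)

/-- The monoidal category structure (data) on the comma category `F ↓ A`. -/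
def commaStruct : MonoidalCategoryStruct (CostructuredArrow F A.X) where
  tensorObj X Y := ⟨X.left ⊗ Y.left, ⟨⟨⟩⟩, δ F X.left Y.left ≫ (X.hom ⊗ₘ Y.hom) ≫ MonObj.mul (X := A.X)⟩
  tensorUnit := ⟨𝟙_ C, ⟨⟨⟩⟩, η F ≫ MonObj.one (X := A.X)⟩
  whiskerLeft X Y₁ Y₂ f := CostructuredArrow.homMk (X.left ◁ f.left) (by
    dsimp [CostructuredArrow.hom, CostructuredArrow.left]
    rw [← δ_natural_right_assoc, ← id_tensorHom, tensorHom_comp_tensorHom_assoc,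
      CostructuredArrow.w f]
    simp)
  whiskerRight {X₁ X₂} f Y := CostructuredArrow.homMk (f.left ▷ Y.left) (by
    dsimp [CostructuredArrow.hom, CostructuredArrow.left]
    rw [← δ_natural_left_assoc, ← tensorHom_id, tensorHom_comp_tensorHom_assoc,
      CostructuredArrow.w f]
    simp)
  tensorHom {X₁ Y₁ X₂ Y₂} f g := CostructuredArrow.homMk (f.left ⊗ₘ g.left) (by
    dsimp [CostructuredArrow.hom, CostructuredArrow.left]
    rw [← δ_natural_assoc, tensorHom_comp_tensorHom_assoc, CostructuredArrow.w f,
      CostructuredArrow.w g])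
  associator X Y Z := CostructuredArrow.isoMk (α_ X.left Y.left Z.left) (by
    dsimp [CostructuredArrow.hom, CostructuredArrow.left]
    rw [tensorHom_def' X.hom, MonoidalCategory.whiskerLeft_comp,
      MonoidalCategory.whiskerLeft_comp]
    simp only [Category.assoc]
    rw [← Functor.OplaxMonoidal.associativity_assoc]
    rw [tensorHom_def (_ ≫ _ ≫ _) Z.hom]
    simp only [comp_whiskerRight, Category.assoc]
    congr 2
    rw [← tensorHom_def'_assoc, ← whisker_exchange_assoc, ← tensorHom_def_assoc]
    show _ = _ ≫ MonObj.mul (X := A.X) ▷ A.X ≫ MonObj.mul (X := A.X)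
    rw [MonObj.mul_assoc A.X]
    erw [associator_naturality_assoc]
    simp [← id_tensorHom, tensorHom_comp_tensorHom_assoc])
  leftUnitor X := CostructuredArrow.isoMk (λ_ X.left) (by
    dsimp [CostructuredArrow.hom, CostructuredArrow.left]
    rw [tensorHom_def (_ ≫ _) X.hom, comp_whiskerRight]
    simp only [Category.assoc]
    rw [← whisker_exchange_assoc]
    show _ = _ ≫ _ ≫ _ ≫ MonObj.one (X := A.X) ▷ A.X ≫ MonObj.mul (X := A.X)
    rw [MonObj.one_mul A.X]
    erw [leftUnitor_naturality]
    rw [Functor.OplaxMonoidal.left_unitality_hom_assoc])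
  rightUnitor X := CostructuredArrow.isoMk (ρ_ X.left) (by
    dsimp [CostructuredArrow.hom, CostructuredArrow.left]
    rw [tensorHom_def' X.hom (_ ≫ _), MonoidalCategory.whiskerLeft_comp]
    simp only [Category.assoc]
    rw [whisker_exchange_assoc]
    show _ = _ ≫ _ ≫ _ ≫ A.X ◁ MonObj.one (X := A.X) ≫ MonObj.mul (X := A.X)
    rw [MonObj.mul_one A.X]
    erw [rightUnitor_naturality]
    rw [Functor.OplaxMonoidal.right_unitality_hom_assoc])

attribute [local instance] commaStruct

/-- The data inducing the monoidal structure along the projection. -/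
def inducingData : Monoidal.InducingFunctorData (CostructuredArrow.proj F A.X) where
  μIso X Y := Iso.refl _
  εIso := Iso.refl _
  whiskerLeft_eq X Y₁ Y₂ f :=
    ((Category.id_comp _).trans (Category.comp_id _)).symm
  whiskerRight_eq f Y :=
    ((Category.id_comp _).trans (Category.comp_id _)).symm
  tensorHom_eq f g :=
    ((Category.id_comp _).trans (Category.comp_id _)).symm
  associator_eq X Y Z := by
    show (α_ X.left Y.left Z.left).hom =
      (𝟙 ((X.left ⊗ Y.left) ⊗ Z.left) ≫ (𝟙 (X.left ⊗ Y.left) ⊗ₘ 𝟙 Z.left)) ≫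
        (α_ X.left Y.left Z.left).hom ≫
          ((𝟙 X.left ⊗ₘ 𝟙 (Y.left ⊗ Z.left)) ≫ 𝟙 (X.left ⊗ (Y.left ⊗ Z.left)))
    simp
  leftUnitor_eq X := by
    show (λ_ X.left).hom =
      (𝟙 (𝟙_ C ⊗ X.left) ≫ (𝟙 (𝟙_ C) ⊗ₘ 𝟙 X.left)) ≫ (λ_ X.left).hom
    simp
  rightUnitor_eq X := by
    show (ρ_ X.left).hom =
      (𝟙 (X.left ⊗ 𝟙_ C) ≫ (𝟙 X.left ⊗ₘ 𝟙 (𝟙_ C))) ≫ (ρ_ X.left).hom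
    simp

/-- The induced monoidal structure on `F ↓ A`. -/
def commaMonoidal : MonoidalCategory (CostructuredArrow F A.X) :=
  Monoidal.induced (CostructuredArrow.proj F A.X) (inducingData F A)

/-- The projection is monoidal. -/
def projMonoidal :
    letI := commaMonoidal F A
    (CostructuredArrow.proj F A.X).Monoidal :=
  letI := commaMonoidal F A
  (Monoidal.fromInducedCoreMonoidal (CostructuredArrow.proj F A.X)
    (inducingData F A)).toMonoidal

end StmtTwoAux

end

/-- If `F : C ⥤ D` is a monoidal functor and `A` is an algebra in `D`, then the
comma category `F ↓ A` (of pairs `(X, x : F(X) ⟶ A)`, implemented as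
`CostructuredArrow F A.X`) carries a monoidal structure with tensor product
`(X,x) ⊗ (Y,y) = (X ⊗ Y, μ_A ∘ (x ⊗ y) ∘ F_{X,Y})` — where
`F_{X,Y} : F(X ⊗ Y) ⟶ F(X) ⊗ F(Y)` is the (inverse) monoidal structure `δ` of
`F` — and unit `(𝟙_ C, ι_A ∘ F₀)`, and such that the forgetful (projection)
functor `F ↓ A ⥤ C` is monoidal. -/
theorem stmt_2 {C D : Type*} [Category C] [Category D]
    [MonoidalCategory C] [MonoidalCategory D]
    (F : C ⥤ D) [F.Monoidal] (A : Mon D) :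
    ∃ inst : MonoidalCategory (CostructuredArrow F A.X),
      (∀ X Y : CostructuredArrow F A.X,
        @MonoidalCategory.tensorObj _ _ inst.toMonoidalCategoryStruct X Y =
          CostructuredArrow.mk
            (δ F X.left Y.left ≫ MonoidalCategory.tensorHom X.hom Y.hom ≫ MonObj.mul (X := A.X))) ∧
      (@MonoidalCategory.tensorUnit _ _ inst.toMonoidalCategoryStruct :
          CostructuredArrow F A.X) =
        CostructuredArrow.mk (η F ≫ MonObj.one (X := A.X)) ∧
      Nonempty (@Functor.Monoidal _ _ inst _ _ _ (CostructuredArrow.proj F A.X)) := by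
  exact ⟨StmtTwoAux.commaMonoidal F A, fun X Y => rfl, rfl,
    ⟨StmtTwoAux.projMonoidal F A⟩⟩
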